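/- Let P be a group satisfying: (S1) for all a₁, a₂ ∈ P there exist x, y with a₂ = x⁻¹a₁⁻¹yxy⁻¹, and (S2) for all a₁, a₂, a₃ ∈ P there exist u, v with a₂ = a₃·u·a₁⁻¹·a₃⁻¹·v·u⁻¹·v⁻¹. Let H = ⊕_{i∈ℤ} P with shift automorphism α. Then every element h̄ ∈ H can be written as h̄ = ḡ₁·α(ḡ₁⁻¹)·ḡ₂·α(ḡ₂⁻¹) for some ḡ₁, ḡ₂ ∈ H (i.e., every element of H is a [2,t]-commutator). -/
import Mathlib


/-- The one-step shift on the restricted direct sum `⊕_{i∈ℤ} P`. -/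
def shiftFun {P : Type*} [Group P] (f : ℤ → P) : ℤ → P := fun i => f (i + 1)

/-- Auxiliary: suffix products `f (n-k+1) * ⋯ * f n` read off by natural recursion. -/
private def sufProd {G : Type*} [Group G] (f : ℤ → G) (n : ℤ) : ℕ → G
  | 0 => 1
  | (k+1) => f (n - k) * sufProd f n k

/-- If `P` satisfies (S1) and (S2), then every finitely supported element of
`⊕_{i∈ℤ} P` is a `[2,t]`-commutator. -/
theorem stmt_10 {P : Type*} [Group P]
    (hS1 : ∀ a₁ a₂ : P, ∃ x y : P, a₂ = x⁻¹ * a₁⁻¹ * y * x * y⁻¹)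
    (hS2 : ∀ a₁ a₂ a₃ : P, ∃ u v : P,
      a₂ = a₃ * u * a₁⁻¹ * a₃⁻¹ * v * u⁻¹ * v⁻¹)
    (f : ℤ → P) (hf : (Function.mulSupport f).Finite) :
    ∃ g₁ g₂ : ℤ → P, (Function.mulSupport g₁).Finite ∧
      (Function.mulSupport g₂).Finite ∧
      f = g₁ * shiftFun g₁⁻¹ * (g₂ * shiftFun g₂⁻¹) := by
  classical
  obtain ⟨n, hn⟩ := hf.bddAbove
  obtain ⟨m, hm⟩ := hf.bddBelow
  have hfn : ∀ i : ℤ, n < i → f i = 1 := by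
    intro i hi
    by_contra h
    exact absurd (hn h) (by omega)
  have hfm : ∀ i : ℤ, i < m → f i = 1 := by
    intro i hi
    by_contra h
    exact absurd (hm h) (by omega)
  set Q : ℤ → P := fun i => sufProd f n (n + 1 - i).toNat with hQ
  have hQtop : ∀ i : ℤ, n < i → Q i = 1 := by
    intro i hi
    have h0 : (n + 1 - i).toNat = 0 := by omega
    simp [hQ, h0, sufProd]
  have hQstep : ∀ i : ℤ, i ≤ n → Q i = f i * Q (i + 1) := by
    intro i hi
    have h1 : (n + 1 - i).toNat = (n - i).toNat + 1 := by omega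
    have h2 : (n + 1 - (i + 1)).toNat = (n - i).toNat := by omega
    have h3 : n - ((n - i).toNat : ℤ) = i := by omega
    simp only [hQ, h1, h2, sufProd, h3]
  have key : ∀ i : ℤ, f i = Q i * (Q (i + 1))⁻¹ := by
    intro i
    rcases le_or_gt i n with h | h
    · rw [hQstep i h]; group
    · rw [hfn i h, hQtop i h, hQtop (i + 1) (by omega)]; group
  obtain ⟨X, Y, hXY⟩ := hS1 (Q (m + 1))⁻¹ (f m)⁻¹
  refine ⟨(fun i => if i = m then Y else if i = m + 1 then X else 1),
    (fun i => if i < m then 1 else if i = m then Y⁻¹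
      else if i = m + 1 then X⁻¹ * Q (m + 1) else Q i),
    ?_, ?_, ?_⟩
  · apply Set.Finite.subset ((Set.finite_singleton (m + 1)).insert m)
    intro i hi
    simp only [Function.mem_mulSupport] at hi
    by_contra hmem
    simp only [Set.mem_insert_iff, Set.mem_singleton_iff] at hmem
    push_neg at hmem
    rw [if_neg hmem.1, if_neg hmem.2] at hi
    exact hi rfl
  · apply Set.Finite.subset (Set.finite_Icc m (max (m + 1) n))
    intro i hi
    simp only [Function.mem_mulSupport] at hi
    by_contra hmem
    simp only [Set.mem_Icc] at hmem
    push_neg at hmem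
    rcases lt_or_ge i m with h | h
    · rw [if_pos h] at hi; exact hi rfl
    · have hgt : max (m + 1) n < i := hmem h
      rw [if_neg (by omega : ¬ i < m), if_neg (by omega : ¬ i = m),
        if_neg (by omega : ¬ i = m + 1), hQtop i (by omega)] at hi
      exact hi rfl
  · funext i
    simp only [Pi.mul_apply, Pi.inv_apply, shiftFun]
    rcases lt_trichotomy i m with h | h | h
    · rcases lt_trichotomy i (m - 1) with h' | h' | h'
      · -- i ≤ m - 2
        rw [if_neg (by omega : ¬ i = m), if_neg (by omega : ¬ i = m + 1),
          if_neg (by omega : ¬ i + 1 = m), if_neg (by omega : ¬ i + 1 = m + 1),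
          if_pos (by omega : i < m), if_pos (by omega : i + 1 < m),
          hfm i (by omega)]
        group
      · -- i = m - 1
        rw [if_neg (by omega : ¬ i = m), if_neg (by omega : ¬ i = m + 1),
          if_pos (by omega : i + 1 = m), if_pos (by omega : i < m),
          if_neg (by omega : ¬ i + 1 < m), if_pos (by omega : i + 1 = m),
          hfm i (by omega)]
        group
      · omega
    · -- i = m
      subst h
      rw [if_pos rfl, if_neg (by omega : ¬ i + 1 = i), if_pos rfl,
        if_neg (by omega : ¬ i < i), if_pos rfl,
        if_neg (by omega : ¬ i + 1 < i), if_neg (by omega : ¬ i + 1 = i),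
        if_pos rfl]
      have h' : f i = (X⁻¹ * ((Q (i + 1))⁻¹)⁻¹ * Y * X * Y⁻¹)⁻¹ := by
        rw [← hXY]; group
      rw [h']; group
    · rcases lt_trichotomy i (m + 1) with h' | h' | h'
      · omega
      · -- i = m + 1
        subst h'
        rw [if_neg (by omega : ¬ m + 1 = m), if_pos rfl,
          if_neg (by omega : ¬ m + 1 + 1 = m), if_neg (by omega : ¬ m + 1 + 1 = m + 1),
          if_neg (by omega : ¬ m + 1 < m), if_neg (by omega : ¬ m + 1 = m), if_pos rfl,
          if_neg (by omega : ¬ m + 1 + 1 < m), if_neg (by omega : ¬ m + 1 + 1 = m),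
          if_neg (by omega : ¬ m + 1 + 1 = m + 1), key (m + 1)]
        group
      · -- i ≥ m + 2
        rw [if_neg (by omega : ¬ i = m), if_neg (by omega : ¬ i = m + 1),
          if_neg (by omega : ¬ i + 1 = m), if_neg (by omega : ¬ i + 1 = m + 1),
          if_neg (by omega : ¬ i < m), if_neg (by omega : ¬ i = m),
          if_neg (by omega : ¬ i = m + 1),
          if_neg (by omega : ¬ i + 1 < m), if_neg (by omega : ¬ i + 1 = m),
          if_neg (by omega : ¬ i + 1 = m + 1), key i]
        group
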